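/- For every η > 0 there is a constant C such that for every integer c and every j ≥ 1, the number of pairs (t₁, t₂) ∈ ℤ² × ℤ² with all coordinates of t₁, t₂ in absolute value in [2ʲ, 2^{j+1}) satisfying ω(t₁, t₂) = 2(t₁₂ t₂₁ − t₁₁ t₂₂) = c is at most C·2^{(2+η)j}. -/

import Mathlib

/-- The symplectic form on `ℤ²`: `ω((a,b),(a',b')) = 2(b a' − a b')`. -/
def omega2 (s t : ℤ × ℤ) : ℤ := 2 * (s.2 * t.1 - s.1 * t.2)

/-- Spacing lemma: a set of integers in `[s,t]` whose pairwise differences are all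
divisible by `q > 0` has at most `(t-s)/q + 1` elements. -/
lemma card_le_of_spacing {s t q : ℤ} (hst : s ≤ t) (hq : 0 < q) (F : Finset ℤ)
    (hF : ∀ x ∈ F, s ≤ x ∧ x ≤ t)
    (hd : ∀ x ∈ F, ∀ y ∈ F, q ∣ (x - y)) :
    (F.card : ℤ) ≤ (t - s) / q + 1 := by
  have h1 : F.card ≤ (Finset.Icc (0:ℤ) ((t-s)/q)).card := by
    apply Finset.card_le_card_of_injOn (fun x => (x - s)/q)
    · intro x hx
      simp only [Finset.mem_coe, Finset.mem_Icc]
      exact ⟨Int.ediv_nonneg (by linarith [(hF x hx).1]) hq.le,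
        Int.ediv_le_ediv hq (by linarith [(hF x hx).2])⟩
    · intro x hx y hy hxy
      simp only [Finset.mem_coe] at hx hy
      obtain ⟨k, hk⟩ := hd y hy x hx
      have hy' : y - s = (x - s) + q * k := by linarith
      have heq : (y - s)/q = (x - s)/q + k := by
        rw [hy', Int.add_mul_ediv_left _ _ hq.ne']
      have hxy' : (x - s)/q = (y - s)/q := hxy
      have hk0 : k = 0 := by rw [← hxy'] at heq; linarith
      rw [hk0, mul_zero] at hk
      linarith
  have h2 : (Finset.Icc (0:ℤ) ((t-s)/q)).card = ((t-s)/q + 1).toNat := by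
    rw [Int.card_Icc]; ring_nf
  have h3 : (0:ℤ) ≤ (t-s)/q := Int.ediv_nonneg (by linarith) hq.le
  have := h1.trans_eq h2
  omega

/-- Count of integers in the interval on which a linear congruence has a solution. -/
lemma inner_count {a b c N : ℤ} (hN : 1 ≤ N) (ha : N ≤ |a|) :
    (((Finset.Icc (-(2*N-1)) (2*N-1))).filter
        (fun X => (2*a) ∣ (2*b*X - c))).card ≤ 4 * Int.gcd a b + 1 := by
  have ha0 : a ≠ 0 := by
    intro h; rw [h] at ha; simp at ha; omega
  set g : ℕ := Int.gcd a b with hg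
  have hgpos : 0 < g := Int.gcd_pos_of_ne_zero_left b ha0
  have hga : (g:ℤ) ∣ a := Int.gcd_dvd_left a b
  have hgb : (g:ℤ) ∣ b := Int.gcd_dvd_right a b
  set a₁ : ℤ := a / g with ha₁
  set b₁ : ℤ := b / g with hb₁
  have haa : a = g * a₁ := (Int.mul_ediv_cancel' hga).symm
  have hbb : b = g * b₁ := (Int.mul_ediv_cancel' hgb).symm
  have ha₁0 : a₁ ≠ 0 := by
    intro h; rw [h, mul_zero] at haa; exact ha0 haa
  have hcop : IsCoprime a₁ b₁ := by
    rw [Int.isCoprime_iff_gcd_eq_one]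
    exact Int.gcd_div_gcd_div_gcd hgpos
  have hq : (0:ℤ) < |a₁| := abs_pos.mpr ha₁0
  have key : (((Finset.Icc (-(2*N-1)) (2*N-1))).filter
      (fun X => (2*a) ∣ (2*b*X - c))).card ≤ ((2*N-1) - (-(2*N-1))) / |a₁| + 1 := by
    have := card_le_of_spacing (s := -(2*N-1)) (t := 2*N-1) (q := |a₁|)
      (by linarith) hq
      (((Finset.Icc (-(2*N-1)) (2*N-1))).filter (fun X => (2*a) ∣ (2*b*X - c)))
      (by intro x hx
          simp only [Finset.mem_filter, Finset.mem_Icc] at hx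
          exact hx.1)
      (by intro x hx y hy
          simp only [Finset.mem_filter, Finset.mem_Icc] at hx hy
          have hdx := hx.2; have hdy := hy.2
          have h1 : (2*a) ∣ (2*b*x - c) - (2*b*y - c) := dvd_sub hdx hdy
          have h2 : (2*a) ∣ 2*(b*(x - y)) := by
            have : (2*b*x - c) - (2*b*y - c) = 2*(b*(x-y)) := by ring
            rwa [this] at h1
          have h3 : a ∣ b*(x - y) := by
            rcases h2 with ⟨k, hk⟩
            exact ⟨k, by linarith⟩
          have h4 : a₁ ∣ b₁ * (x - y) := by
            rw [haa, hbb] at h3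
            rw [mul_assoc] at h3
            exact (mul_dvd_mul_iff_left (by exact_mod_cast hgpos.ne' : (g:ℤ) ≠ 0)).mp h3
          have h5 : a₁ ∣ (x - y) := hcop.dvd_of_dvd_mul_left h4
          exact (abs_dvd _ _).mpr h5)
    exact_mod_cast this
  have hbound : ((2*N-1) - (-(2*N-1))) / |a₁| ≤ 4 * (g:ℤ) := by
    have h1 : (2*N-1) - (-(2*N-1)) = 4*N - 2 := by ring
    rw [h1]
    have hlt : (4*N - 2) / |a₁| < 4 * (g:ℤ) + 1 := by
      rw [Int.ediv_lt_iff_lt_mul hq]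
      have hag : |a| = (g:ℤ) * |a₁| := by
        rw [haa, abs_mul, abs_of_nonneg (by positivity : (0:ℤ) ≤ (g:ℤ))]
      have hexp : (4 * (g:ℤ) + 1) * |a₁| = 4 * ((g:ℤ) * |a₁|) + |a₁| := by ring
      rw [hexp, ← hag]
      have h1a : (1:ℤ) ≤ |a₁| := hq
      linarith
    omega
  have hfin : ((((Finset.Icc (-(2*N-1)) (2*N-1))).filter
      (fun X => (2*a) ∣ (2*b*X - c))).card : ℤ) ≤ (4 * (g:ℤ) + 1) := by
    calc ((((Finset.Icc (-(2*N-1)) (2*N-1))).filter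
        (fun X => (2*a) ∣ (2*b*X - c))).card : ℤ)
        ≤ ((2*N-1) - (-(2*N-1))) / |a₁| + 1 := key
    _ ≤ 4 * (g:ℤ) + 1 := by linarith
  exact_mod_cast hfin

/-- Count of multiples of `d` in the interval. -/
lemma mult_count {d s t : ℤ} (hst : s ≤ t) (hd : 0 < d) :
    (((Finset.Icc s t).filter (fun x => d ∣ x)).card : ℤ) ≤ (t - s) / d + 1 := by
  apply card_le_of_spacing hst hd
  · intro x hx
    simp only [Finset.mem_filter, Finset.mem_Icc] at hx
    exact hx.1
  · intro x hx y hy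
    simp only [Finset.mem_filter, Finset.mem_Icc] at hx hy
    exact dvd_sub hx.2 hy.2

set_option maxHeartbeats 1000000 in
theorem symplectic_level_count (η : ℝ) (hη : 0 < η) :
    ∃ C : ℝ, 0 < C ∧ ∀ (c : ℤ) (j : ℕ), 1 ≤ j →
      ((Set.ncard {t : (ℤ × ℤ) × (ℤ × ℤ) |
          (2 ^ j ≤ |t.1.1| ∧ |t.1.1| < 2 ^ (j + 1)) ∧
          (2 ^ j ≤ |t.1.2| ∧ |t.1.2| < 2 ^ (j + 1)) ∧
          (2 ^ j ≤ |t.2.1| ∧ |t.2.1| < 2 ^ (j + 1)) ∧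
          (2 ^ j ≤ |t.2.2| ∧ |t.2.2| < 2 ^ (j + 1)) ∧
          omega2 t.1 t.2 = c} : ℝ))
        ≤ C * (2 : ℝ) ^ ((2 + η) * j) := by
  have hlog2 : (0:ℝ) < Real.log 2 := Real.log_pos one_lt_two
  set cc : ℝ := η * Real.log 2 with hccdef
  have hcc : 0 < cc := mul_pos hη hlog2
  refine ⟨160 * (1/cc + 2), by positivity, ?_⟩
  intro c j hj
  obtain ⟨N, hNdef⟩ : ∃ n : ℤ, n = 2^j := ⟨_, rfl⟩
  have hN : 2 ≤ N := by
    rw [hNdef]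
    calc (2:ℤ) = 2^1 := by norm_num
    _ ≤ 2^j := pow_le_pow_right₀ (by norm_num) hj
  obtain ⟨B, hBdef⟩ : ∃ b : Finset ℤ,
      b = (Finset.Icc (-(2*N-1)) (2*N-1)).filter (fun x => N ≤ |x|) := ⟨_, rfl⟩
  obtain ⟨T, hTdef⟩ : ∃ t : Finset ((ℤ×ℤ)×(ℤ×ℤ)),
      t = ((B ×ˢ B) ×ˢ (B ×ˢ B)).filter (fun t => omega2 t.1 t.2 = c) := ⟨_, rfl⟩
  obtain ⟨M', hMdef⟩ : ∃ m : ℕ, m = 2^(j+1) := ⟨_, rfl⟩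
  have hMN : ((M' : ℕ) : ℤ) = 2*N := by rw [hMdef, hNdef]; push_cast [pow_succ]; ring
  have hMR : ((M' : ℕ) : ℝ) = 2*(N:ℝ) := by exact_mod_cast congrArg (Int.cast : ℤ → ℝ) hMN
  have habs : ∀ x : ℤ, |x| < 2*N ↔ (-(2*N-1) ≤ x ∧ x ≤ 2*N-1) := by
    intro x
    rw [show (2*N) = (2*N-1)+1 by ring, Int.lt_add_one_iff, abs_le]
    omega
  -- identify the set with the finset T
  have hset : {t : (ℤ × ℤ) × (ℤ × ℤ) |
          (2 ^ j ≤ |t.1.1| ∧ |t.1.1| < 2 ^ (j + 1)) ∧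
          (2 ^ j ≤ |t.1.2| ∧ |t.1.2| < 2 ^ (j + 1)) ∧
          (2 ^ j ≤ |t.2.1| ∧ |t.2.1| < 2 ^ (j + 1)) ∧
          (2 ^ j ≤ |t.2.2| ∧ |t.2.2| < 2 ^ (j + 1)) ∧
          omega2 t.1 t.2 = c} = ↑T := by
    ext t
    have h2N : (2:ℤ)^(j+1) = 2*N := by rw [hNdef, pow_succ]; ring
    simp only [Set.mem_setOf_eq, hTdef, Finset.coe_filter, Finset.mem_product,
      hBdef, Finset.mem_filter, Finset.mem_Icc, h2N, ← hNdef, habs]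
    tauto
  have hcard : (Set.ncard {t : (ℤ × ℤ) × (ℤ × ℤ) |
          (2 ^ j ≤ |t.1.1| ∧ |t.1.1| < 2 ^ (j + 1)) ∧
          (2 ^ j ≤ |t.1.2| ∧ |t.1.2| < 2 ^ (j + 1)) ∧
          (2 ^ j ≤ |t.2.1| ∧ |t.2.1| < 2 ^ (j + 1)) ∧
          (2 ^ j ≤ |t.2.2| ∧ |t.2.2| < 2 ^ (j + 1)) ∧
          omega2 t.1 t.2 = c}) = T.card := by
    rw [hset, Set.ncard_coe_finset]
  rw [hcard]
  -- step 2: fiberwise over the first pair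
  have hstep2 : T.card ≤ ∑ p ∈ B ×ˢ B, ((B ×ˢ B).filter (fun q => omega2 p q = c)).card := by
    rw [Finset.card_eq_sum_card_fiberwise (f := Prod.fst) (t := B ×ˢ B)
      (fun x hx => by simp only [hTdef, Finset.mem_coe, Finset.mem_filter] at hx
                      exact (Finset.mem_product.mp hx.1).1)]
    apply Finset.sum_le_sum
    intro p _
    apply Finset.card_le_card_of_injOn (fun x => x.2)
    · intro x hx
      simp only [hTdef, Finset.mem_coe, Finset.mem_filter] at hx ⊢
      obtain ⟨⟨hmem, homega⟩, hfst⟩ := hx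
      refine ⟨(Finset.mem_product.mp hmem).2, ?_⟩
      rw [← hfst]; exact homega
    · intro x hx y hy hxy
      simp only [Finset.mem_coe, Finset.mem_filter, Finset.coe_filter, Set.mem_setOf_eq] at hx hy
      exact Prod.ext (hx.2.trans hy.2.symm) hxy
  -- step 3: divisor-type bound for each fiber
  have hp1 : ∀ p : ℤ × ℤ, p ∈ B ×ˢ B →
      ((B ×ˢ B).filter (fun q => omega2 p q = c)).card ≤ 4 * Int.gcd p.1 p.2 + 1 := by
    intro p hp
    obtain ⟨hpa, hpb⟩ := Finset.mem_product.mp hp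
    simp only [hBdef, Finset.mem_filter, Finset.mem_Icc] at hpa
    have ha : N ≤ |p.1| := hpa.2
    have step : ((B ×ˢ B).filter (fun q => omega2 p q = c)).card ≤
        ((Finset.Icc (-(2*N-1)) (2*N-1)).filter (fun X => (2*p.1) ∣ (2*p.2*X - c))).card := by
      apply Finset.card_le_card_of_injOn (fun q => q.1)
      · intro q hq
        simp only [Finset.mem_coe, Finset.mem_filter] at hq ⊢
        obtain ⟨hqmem, hqeq⟩ := hq
        have hq1 : q.1 ∈ B := (Finset.mem_product.mp hqmem).1
        have hq1' : q.1 ∈ Finset.Icc (-(2*N-1)) (2*N-1) := by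
          rw [hBdef] at hq1
          exact Finset.mem_of_mem_filter _ hq1
        simp only [omega2] at hqeq
        exact ⟨hq1', ⟨q.2, by linear_combination hqeq⟩⟩
      · intro q hq r hr hqr
        simp only [Finset.mem_coe, Finset.mem_filter, Finset.coe_filter, Set.mem_setOf_eq] at hq hr
        simp only [omega2] at hq hr
        have ha0 : p.1 ≠ 0 := by intro h; rw [h] at ha; simp at ha; omega
        have h1 := hq.2
        have h2 := hr.2
        simp only at hqr
        rw [hqr] at h1
        exact Prod.ext hqr (mul_left_cancel₀ ha0 (by linarith))
    exact step.trans (inner_count (by linarith) ha)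
  -- counting multiples of d in B
  have hcnt : ∀ d : ℕ, 1 ≤ d →
      (((B.filter (fun x => (d:ℤ) ∣ x)).card : ℝ)) ≤ 4*(N:ℝ)/(d:ℝ) + 1 := by
    intro d hd1
    have hd0 : (0:ℤ) < (d:ℤ) := by exact_mod_cast hd1
    have hd0R : (0:ℝ) < (d:ℝ) := by exact_mod_cast hd1
    have hsub : B.filter (fun x => (d:ℤ) ∣ x) ⊆
        (Finset.Icc (-(2*N-1)) (2*N-1)).filter (fun x => (d:ℤ) ∣ x) := by
      rw [hBdef]
      exact Finset.filter_subset_filter _ (Finset.filter_subset _ _)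
    have h1 : (((B.filter (fun x => (d:ℤ) ∣ x)).card : ℤ))
        ≤ ((2*N-1) - (-(2*N-1)))/(d:ℤ) + 1 :=
      le_trans (by exact_mod_cast Finset.card_le_card hsub) (mult_count (by linarith) hd0)
    have h2 : ((((2*N-1) - (-(2*N-1)))/(d:ℤ) : ℤ) : ℝ) ≤ (4*(N:ℝ) - 2)/(d:ℝ) := by
      rw [le_div_iff₀ hd0R]
      have h3 := Int.ediv_mul_le ((2*N-1) - (-(2*N-1))) (b := (d:ℤ)) hd0.ne'
      have h4 : ((((2*N-1) - (-(2*N-1)))/(d:ℤ) * (d:ℤ) : ℤ) : ℝ) ≤ ((2*N-1) - (-(2*N-1)) : ℤ) := by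
        exact_mod_cast h3
      push_cast at h4 ⊢
      linarith
    have h5 : (((B.filter (fun x => (d:ℤ) ∣ x)).card : ℝ)) ≤ (4*(N:ℝ) - 2)/(d:ℝ) + 1 := by
      have h1R : (((B.filter (fun x => (d:ℤ) ∣ x)).card : ℝ))
          ≤ ((((2*N-1) - (-(2*N-1)))/(d:ℤ) : ℤ) : ℝ) + 1 := by exact_mod_cast h1
      refine h1R.trans ?_
      have := h2
      push_cast at this ⊢
      linarith
    refine h5.trans ?_
    have : (4*(N:ℝ) - 2)/(d:ℝ) ≤ 4*(N:ℝ)/(d:ℝ) := by gcongr <;> linarith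
    linarith
  -- gcd dominated by sum over common divisors
  have hgcd_le : ∀ p : ℤ × ℤ, p ∈ B ×ˢ B → (Int.gcd p.1 p.2 : ℝ) ≤
      ∑ d ∈ Finset.Icc 1 M', (if (d:ℤ) ∣ p.1 ∧ (d:ℤ) ∣ p.2 then (d:ℝ) else 0) := by
    intro p hp
    obtain ⟨hpa, _⟩ := Finset.mem_product.mp hp
    simp only [hBdef, Finset.mem_filter, Finset.mem_Icc] at hpa
    have hne : p.1 ≠ 0 := by
      intro h
      have h2 := hpa.2
      rw [h, abs_zero] at h2
      omega
    have hgd : Int.gcd p.1 p.2 = Int.gcd p.1 p.2 := rfl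
    obtain ⟨g, hgd⟩ : ∃ g : ℕ, g = Int.gcd p.1 p.2 := ⟨_, rfl⟩
    rw [← hgd]
    have hg1 : 1 ≤ g := hgd ▸ Int.gcd_pos_of_ne_zero_left p.2 hne
    have hgM : g ≤ M' := by
      have h1 : (g:ℤ) ≤ (p.1.natAbs : ℤ) := by
        rw [hgd]
        exact_mod_cast Nat.gcd_le_left _ (Int.natAbs_pos.mpr hne)
      have h2 : ((p.1.natAbs : ℤ)) = |p.1| := (Int.abs_eq_natAbs p.1).symm
      have h3 : |p.1| ≤ 2*N - 1 := abs_le.mpr hpa.1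
      have : (g:ℤ) ≤ (M':ℤ) := by rw [hMN]; omega
      exact_mod_cast this
    have key := Finset.single_le_sum
      (f := fun d : ℕ => if (d:ℤ) ∣ p.1 ∧ (d:ℤ) ∣ p.2 then (d:ℝ) else 0)
      (fun d _ => by split_ifs <;> positivity)
      (Finset.mem_Icc.mpr ⟨hg1, hgM⟩)
    have hdl : (g:ℤ) ∣ p.1 := by rw [hgd]; exact Int.gcd_dvd_left _ _
    have hdr : (g:ℤ) ∣ p.2 := by rw [hgd]; exact Int.gcd_dvd_right _ _
    simpa [hdl, hdr] using key
  -- gcd sum bound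
  have hGS : ∑ p ∈ B ×ˢ B, (Int.gcd p.1 p.2 : ℝ) ≤
      ∑ d ∈ Finset.Icc 1 M', (d:ℝ) * (((B.filter (fun x => (d:ℤ) ∣ x)).card : ℝ))^2 := by
    calc ∑ p ∈ B ×ˢ B, (Int.gcd p.1 p.2 : ℝ)
        ≤ ∑ p ∈ B ×ˢ B, ∑ d ∈ Finset.Icc 1 M',
            (if (d:ℤ) ∣ p.1 ∧ (d:ℤ) ∣ p.2 then (d:ℝ) else 0) := Finset.sum_le_sum hgcd_le
      _ = ∑ d ∈ Finset.Icc 1 M', ∑ p ∈ B ×ˢ B,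
            (if (d:ℤ) ∣ p.1 ∧ (d:ℤ) ∣ p.2 then (d:ℝ) else 0) := Finset.sum_comm
      _ = ∑ d ∈ Finset.Icc 1 M', (d:ℝ) * (((B.filter (fun x => (d:ℤ) ∣ x)).card : ℝ))^2 := by
          apply Finset.sum_congr rfl
          intro d _
          rw [← Finset.sum_filter, Finset.filter_product, Finset.sum_const,
            Finset.card_product, nsmul_eq_mul]
          push_cast
          ring
  -- harmonic sum bound
  have hHarm : ∑ d ∈ Finset.Icc 1 M', (1/(d:ℝ)) ≤ (j:ℝ) + 2 := by
    have h1 : ((harmonic M' : ℚ) : ℝ) = ∑ d ∈ Finset.Icc 1 M', (1/(d:ℝ)) := by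
      rw [harmonic_eq_sum_Icc]
      push_cast
      simp [one_div]
    rw [← h1]
    have h2 := harmonic_le_one_add_log M'
    have h3 : Real.log M' = ((j:ℝ)+1) * Real.log 2 := by
      rw [hMdef]
      push_cast [Real.log_pow]
      ring
    have h4 : Real.log 2 ≤ 1 := by
      have := Real.log_two_lt_d9
      linarith
    have h5 : (0:ℝ) ≤ (j:ℝ) + 1 := by positivity
    nlinarith [hlog2.le]
  -- per-divisor term bound
  have hterm : ∀ d ∈ Finset.Icc 1 M',
      (d:ℝ) * (((B.filter (fun x => (d:ℤ) ∣ x)).card : ℝ))^2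
        ≤ 16*(N:ℝ)^2 * (1/(d:ℝ)) + 8*(N:ℝ) + (M':ℝ) := by
    intro d hd
    obtain ⟨hd1, hd2⟩ := Finset.mem_Icc.mp hd
    have hd0R : (0:ℝ) < (d:ℝ) := by exact_mod_cast hd1
    have hcd := hcnt d hd1
    have hcard0 : (0:ℝ) ≤ ((B.filter (fun x => (d:ℤ) ∣ x)).card : ℝ) := by positivity
    have hNpos : (0:ℝ) < (N:ℝ) := by exact_mod_cast (by linarith : (0:ℤ) < N)
    have step1 : (d:ℝ) * (((B.filter (fun x => (d:ℤ) ∣ x)).card : ℝ))^2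
        ≤ (d:ℝ) * (4*(N:ℝ)/(d:ℝ) + 1)^2 := by
      apply mul_le_mul_of_nonneg_left _ hd0R.le
      exact pow_le_pow_left₀ hcard0 hcd 2
    refine step1.trans ?_
    have hexp : (d:ℝ) * (4*(N:ℝ)/(d:ℝ) + 1)^2
        = 16*(N:ℝ)^2 * (1/(d:ℝ)) + 8*(N:ℝ) + (d:ℝ) := by
      field_simp
      ring
    rw [hexp]
    have : (d:ℝ) ≤ (M':ℝ) := by exact_mod_cast hd2
    linarith
  -- sum the term bound
  have hsum : ∑ d ∈ Finset.Icc 1 M', (d:ℝ) * (((B.filter (fun x => (d:ℤ) ∣ x)).card : ℝ))^2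
      ≤ 16*(N:ℝ)^2 * ((j:ℝ)+2) + 8*(N:ℝ)*(M':ℝ) + (M':ℝ)*(M':ℝ) := by
    calc ∑ d ∈ Finset.Icc 1 M', (d:ℝ) * (((B.filter (fun x => (d:ℤ) ∣ x)).card : ℝ))^2
        ≤ ∑ d ∈ Finset.Icc 1 M', (16*(N:ℝ)^2 * (1/(d:ℝ)) + 8*(N:ℝ) + (M':ℝ)) :=
          Finset.sum_le_sum hterm
      _ = 16*(N:ℝ)^2 * (∑ d ∈ Finset.Icc 1 M', (1/(d:ℝ)))
            + (8*(N:ℝ) + (M':ℝ)) * (Finset.Icc 1 M').card := by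
          rw [Finset.sum_add_distrib, Finset.sum_add_distrib, ← Finset.mul_sum,
            Finset.sum_const, Finset.sum_const]
          push_cast
          ring
      _ ≤ 16*(N:ℝ)^2 * ((j:ℝ)+2) + (8*(N:ℝ) + (M':ℝ)) * (M':ℝ) := by
          have hN2 : (0:ℝ) ≤ (N:ℝ)^2 := by positivity
          have hc1 : ((Finset.Icc 1 M').card : ℝ) ≤ (M':ℝ) := by
            rw [Nat.card_Icc]
            push_cast
            simp
          have hNpos : (0:ℝ) < (N:ℝ) := by exact_mod_cast (by linarith : (0:ℤ) < N)
          have hM0 : (0:ℝ) ≤ (M':ℝ) := by positivity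
          have : (0:ℝ) ≤ 8*(N:ℝ) + (M':ℝ) := by linarith
          nlinarith
      _ = 16*(N:ℝ)^2 * ((j:ℝ)+2) + 8*(N:ℝ)*(M':ℝ) + (M':ℝ)*(M':ℝ) := by ring
  -- size of B
  have hBcard : ((B.card : ℝ)) ≤ 4*(N:ℝ) := by
    have h0 : B.card ≤ (Finset.Icc (-(2*N-1)) (2*N-1)).card := by
      rw [hBdef]; exact Finset.card_filter_le _ _
    rw [Int.card_Icc] at h0
    have h1 : (B.card : ℤ) ≤ 4*N := by omega
    exact_mod_cast h1
  -- total bound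
  have htotal : (T.card : ℝ) ≤ 160 * (N:ℝ)^2 * ((j:ℝ)+2) := by
    have hNpos : (0:ℝ) < (N:ℝ) := by exact_mod_cast (by linarith : (0:ℤ) < N)
    have hstep23 : T.card ≤ ∑ p ∈ B ×ˢ B, (4 * Int.gcd p.1 p.2 + 1) :=
      hstep2.trans (Finset.sum_le_sum hp1)
    have hR : (T.card : ℝ) ≤ ∑ p ∈ B ×ˢ B, (4 * (Int.gcd p.1 p.2 : ℝ) + 1) := by
      have := (Nat.cast_le (α := ℝ)).mpr hstep23
      push_cast at this
      convert this using 2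
    have hsplit : ∑ p ∈ B ×ˢ B, (4 * (Int.gcd p.1 p.2 : ℝ) + 1)
        = 4 * (∑ p ∈ B ×ˢ B, (Int.gcd p.1 p.2 : ℝ)) + ((B ×ˢ B).card : ℝ) := by
      rw [Finset.sum_add_distrib, ← Finset.mul_sum, Finset.sum_const, nsmul_eq_mul, mul_one]
    have hBB : ((B ×ˢ B).card : ℝ) ≤ 16*(N:ℝ)^2 := by
      rw [Finset.card_product]
      push_cast
      nlinarith [hBcard, hNpos.le, (by positivity : (0:ℝ) ≤ (B.card:ℝ))]
    have hGS2 : ∑ p ∈ B ×ˢ B, (Int.gcd p.1 p.2 : ℝ)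
        ≤ 16*(N:ℝ)^2 * ((j:ℝ)+2) + 20*(N:ℝ)^2 := by
      refine (hGS.trans hsum).trans ?_
      rw [hMR]
      nlinarith [sq_nonneg (N:ℝ)]
    have hj0 : (0:ℝ) ≤ (j:ℝ) := by positivity
    calc (T.card : ℝ) ≤ 4 * (∑ p ∈ B ×ˢ B, (Int.gcd p.1 p.2 : ℝ)) + ((B ×ˢ B).card : ℝ) := by
          rw [← hsplit]; exact hR
      _ ≤ 4 * (16*(N:ℝ)^2 * ((j:ℝ)+2) + 20*(N:ℝ)^2) + 16*(N:ℝ)^2 := by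
          have := hGS2
          have hg0 : (0:ℝ) ≤ ∑ p ∈ B ×ˢ B, (Int.gcd p.1 p.2 : ℝ) :=
            Finset.sum_nonneg (fun p _ => by positivity)
          linarith
      _ ≤ 160 * (N:ℝ)^2 * ((j:ℝ)+2) := by nlinarith [hNpos.le]
  -- final exponential comparison
  have hNR : (N:ℝ) = (2:ℝ)^(j:ℕ) := by rw [hNdef]; push_cast; ring
  have hsplitpow : (2:ℝ)^((2+η)*(j:ℝ)) = (N:ℝ)^2 * (2:ℝ)^(η*(j:ℝ)) := by
    rw [show (2+η)*(j:ℝ) = (j:ℝ)*2 + η*(j:ℝ) by ring, Real.rpow_add two_pos, hNR]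
    congr 1
    rw [Real.rpow_mul two_pos.le, Real.rpow_natCast, ← Real.rpow_natCast ((2:ℝ)^j) 2]
    norm_num
  have hexp2 : (j:ℝ) + 2 ≤ (1/cc + 2) * (2:ℝ)^(η*(j:ℝ)) := by
    have h2pow : (2:ℝ)^(η*(j:ℝ)) = Real.exp (cc*(j:ℝ)) := by
      rw [Real.rpow_def_of_pos two_pos, hccdef]
      ring_nf
    rw [h2pow]
    have hE : cc*(j:ℝ) + 1 ≤ Real.exp (cc*(j:ℝ)) := Real.add_one_le_exp _
    have hj0 : (0:ℝ) ≤ (j:ℝ) := by positivity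
    have hccj : (0:ℝ) ≤ cc*(j:ℝ) := by positivity
    have h1cc : (1/cc) * cc = 1 := one_div_mul_cancel hcc.ne'
    calc (j:ℝ) + 2 ≤ (1/cc)*cc*(j:ℝ) + 1/cc + 2*(cc*(j:ℝ)) + 2 := by
          rw [h1cc, one_mul]
          have : (0:ℝ) ≤ 1/cc := by positivity
          linarith
      _ = (1/cc + 2) * (cc*(j:ℝ) + 1) := by ring
      _ ≤ (1/cc + 2) * Real.exp (cc*(j:ℝ)) := by
          apply mul_le_mul_of_nonneg_left hE
          positivity
  calc (T.card : ℝ) ≤ 160 * (N:ℝ)^2 * ((j:ℝ)+2) := htotal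
    _ ≤ 160 * (N:ℝ)^2 * ((1/cc + 2) * (2:ℝ)^(η*(j:ℝ))) := by
        have hN2 : (0:ℝ) ≤ (N:ℝ)^2 := by positivity
        have := hexp2
        nlinarith
    _ = 160 * (1/cc + 2) * (2:ℝ)^((2+η)*(j:ℝ)) := by
        rw [hsplitpow]; ring
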